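/- Let E be a regular expression in linear form (each letter occurs at most once). Then a nonempty word x₁x₂···xₘ belongs to L(E) if and only if x₁ ∈ First(E), xₘ ∈ Last(E), and xᵢ₊₁ ∈ Follow(xᵢ, E) for all 1 ≤ i < m. Consequently the position automaton of E recognizes L(E). -/

import Mathlib

attribute [local instance] Classical.propDecidable

namespace Mtb

variable {A : Type*}

/-- `First L`: letters that can begin a word of `L`. -/
def First (L : Set (List A)) : Set A := {x | ∃ v, x :: v ∈ L}

/-- `Last L`: letters that can end a word of `L`. -/
def Last (L : Set (List A)) : Set A := {x | ∃ u, u ++ [x] ∈ L}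

/-- `Follow x L`: letters that can immediately follow `x` in a word of `L`. -/
def Follow (x : A) (L : Set (List A)) : Set A := {y | ∃ u v, u ++ x :: y :: v ∈ L}

/-- Letters occurring in some word of `L`. -/
def lettersOf (L : Set (List A)) : Set A := {a | ∃ w ∈ L, a ∈ w}

/-- Concatenation of languages. -/
def cat (L M : Set (List A)) : Set (List A) := {w | ∃ u ∈ L, ∃ v ∈ M, w = u ++ v}

/-- `nullL L = {ε}` if `ε ∈ L`, `∅` otherwise. -/
def nullL (L : Set (List A)) : Set (List A) := {w | w = [] ∧ [] ∈ L}

/-- Apply the tilde (add ε) or bar (remove ε) operator attached to the pair `p`, if any. -/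
def adjust (B T : Set (ℕ × ℕ)) (p : ℕ × ℕ) (L : Set (List A)) : Set (List A) :=
  if p ∈ T then L ∪ {[]} else if p ∈ B then L \ {[]} else L

/-- The language of the multi-tilde-bar expression `E'_{i,j}` built from factor languages
`E`, bar set `B` and tilde set `T`. -/
noncomputable def mtb (E : ℕ → Set (List A)) (B T : Set (ℕ × ℕ)) (i j : ℕ) : Set (List A) :=
  if i = j then adjust B T (i, i) (E i)
  else adjust B T (i, j) (⋃ k ∈ Set.Ico i j, cat (mtb E B T i k) (mtb E B T (k + 1) j))
termination_by j - i
decreasing_by all_goals (simp_all [Set.mem_Ico]; omega)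

/-- The bars-and-tildes sets are well-formed for `n` factors: disjoint, and within range. -/
def WellFormed (B T : Set (ℕ × ℕ)) (n : ℕ) : Prop :=
  Disjoint B T ∧ ∀ p ∈ B ∪ T, 1 ≤ p.1 ∧ p.1 ≤ p.2 ∧ p.2 ≤ n

/-- The `⊙ε` operator at level `p`: concatenation, with `ε` removed when `p` is a bar pair. -/
def odot (B : Set (ℕ × ℕ)) (p : ℕ × ℕ) (L M : Set (List A)) : Set (List A) :=
  if p ∈ B then cat L M \ {[]} else cat L M

end Mtb

namespace Mtb

/-- The list of letter occurrences of a regular expression. -/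
def lettersList {A : Type*} : RegularExpression A → List A
  | .zero => []
  | .epsilon => []
  | .char a => [a]
  | .plus P Q => lettersList P ++ lettersList Q
  | .comp P Q => lettersList P ++ lettersList Q
  | .star P => lettersList P

/-- A regular expression is in linear form if each letter occurs at most once in it. -/
def Linear {A : Type*} (E : RegularExpression A) : Prop := (lettersList E).Nodup

/-- The position automaton of a language `L` over the alphabet of positions: states are
`none` (the initial state `q₀`) and `some x` for positions `x`; there is a transition
labelled `a` from `q₀` to `some a` when `a ∈ First L`, and from `some x` to `some a`
when `a ∈ Follow x L`; final states are `some x` for `x ∈ Last L`, plus `q₀` if `ε ∈ L`. -/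
def positionNFA {A : Type*} (L : Set (List A)) : NFA A (Option A) where
  step q a :=
    {s | s = some a ∧ match q with
          | none => a ∈ First L
          | some x => a ∈ Follow x L}
  start := {none}
  accept := {q | (∃ x ∈ Last L, q = some x) ∨ (q = none ∧ [] ∈ L)}


section Lemmas

variable {A : Type*} {L M : Set (List A)} {l m : Language A} {x y : A}

lemma first_letters (h : x ∈ First L) : x ∈ lettersOf L := by
  obtain ⟨v, hv⟩ := h; exact ⟨_, hv, List.mem_cons_self⟩

lemma last_letters (h : x ∈ Last L) : x ∈ lettersOf L := by
  obtain ⟨u, hu⟩ := h; exact ⟨_, hu, by simp⟩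

lemma follow_letters_left (h : y ∈ Follow x L) : x ∈ lettersOf L := by
  obtain ⟨u, v, huv⟩ := h; exact ⟨_, huv, by simp⟩

lemma follow_letters_right (h : y ∈ Follow x L) : y ∈ lettersOf L := by
  obtain ⟨u, v, huv⟩ := h; exact ⟨_, huv, by simp⟩

lemma first_union : First (L ∪ M) = First L ∪ First M := by
  ext x
  constructor
  · rintro ⟨v, hv | hv⟩
    exacts [Or.inl ⟨v, hv⟩, Or.inr ⟨v, hv⟩]
  · rintro (⟨v, hv⟩ | ⟨v, hv⟩)
    exacts [⟨v, Or.inl hv⟩, ⟨v, Or.inr hv⟩]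

lemma last_union : Last (L ∪ M) = Last L ∪ Last M := by
  ext x
  constructor
  · rintro ⟨u, hu | hu⟩
    exacts [Or.inl ⟨u, hu⟩, Or.inr ⟨u, hu⟩]
  · rintro (⟨u, hu⟩ | ⟨u, hu⟩)
    exacts [⟨u, Or.inl hu⟩, ⟨u, Or.inr hu⟩]

lemma follow_union : Follow x (L ∪ M) = Follow x L ∪ Follow x M := by
  ext y
  constructor
  · rintro ⟨u, v, hu | hu⟩
    exacts [Or.inl ⟨u, v, hu⟩, Or.inr ⟨u, v, hu⟩]
  · rintro (⟨u, v, hu⟩ | ⟨u, v, hu⟩)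
    exacts [⟨u, v, Or.inl hu⟩, ⟨u, v, Or.inr hu⟩]

lemma first_mul_sub (h : x ∈ First (l * m : Language A)) :
    x ∈ First (l : Set (List A)) ∨ ([] ∈ l ∧ x ∈ First (m : Set (List A))) := by
  obtain ⟨v, hv⟩ := h
  replace hv := Language.mem_mul.mp hv
  obtain ⟨a, ha, b, hb, hab⟩ := hv
  cases a with
  | nil => right; simp at hab; exact ⟨ha, v, hab ▸ hb⟩
  | cons c a' =>
    left
    obtain ⟨rfl, -⟩ : c = x ∧ a' ++ b = v := by simpa using hab
    exact ⟨a', ha⟩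

lemma last_mul_sub (h : x ∈ Last (l * m : Language A)) :
    x ∈ Last (m : Set (List A)) ∨ (x ∈ Last (l : Set (List A)) ∧ [] ∈ m) := by
  obtain ⟨u, hu⟩ := h
  replace hu := Language.mem_mul.mp hu
  obtain ⟨a, ha, b, hb, hab⟩ := hu
  rcases b.eq_nil_or_concat with rfl | ⟨b', c, rfl⟩
  · right
    simp only [List.append_nil] at hab
    exact ⟨⟨u, hab ▸ ha⟩, hb⟩
  · left
    simp only [List.concat_eq_append, ← List.append_assoc] at hab
    obtain ⟨-, hc⟩ := List.append_inj' hab (by simp)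
    obtain rfl : c = x := by simpa using hc
    exact ⟨b', by simp at hb; exact hb⟩

lemma follow_mul_sub (h : y ∈ Follow x (l * m : Language A)) :
    y ∈ Follow x (l : Set (List A)) ∨ y ∈ Follow x (m : Set (List A)) ∨
      (x ∈ Last (l : Set (List A)) ∧ y ∈ First (m : Set (List A))) := by
  obtain ⟨u, v, huv⟩ := h
  replace huv := Language.mem_mul.mp huv
  obtain ⟨a, ha, b, hb, hab⟩ := huv
  rw [List.append_eq_append_iff] at hab
  rcases hab with ⟨a', rfl, hb'⟩ | ⟨c', rfl, hc'⟩
  · exact Or.inr (Or.inl ⟨a', v, hb' ▸ hb⟩)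
  · rcases c' with _ | ⟨x', _ | ⟨y', c''⟩⟩
    · simp only [List.nil_append] at hc'
      exact Or.inr (Or.inl ⟨[], v, by simp only [List.nil_append]; subst hc'; exact hb⟩)
    · obtain ⟨rfl, hyv⟩ : x = x' ∧ y :: v = b := by simpa using hc'
      exact Or.inr (Or.inr ⟨⟨u, ha⟩, ⟨v, hyv ▸ hb⟩⟩)
    · obtain ⟨rfl, rfl, -⟩ : x = x' ∧ y = y' ∧ v = c'' ++ b := by simpa using hc'
      exact Or.inl ⟨u, c'', ha⟩

lemma first_flatten_aux : ∀ (Ls : List (List A)), (∀ w ∈ Ls, w ∈ l) →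
    ∀ v, Ls.flatten = x :: v → x ∈ First (l : Set (List A)) := by
  intro Ls
  induction Ls with
  | nil => intro _ v h; simp at h
  | cons w Ls ih =>
    intro hmem v h
    cases w with
    | nil => exact ih (fun w hw => hmem w (by simp [hw])) v (by simpa using h)
    | cons c w' =>
      obtain ⟨rfl, -⟩ : c = x ∧ w' ++ Ls.flatten = v := by simpa using h
      exact ⟨w', hmem _ (by simp)⟩

lemma last_flatten_aux : ∀ (Ls : List (List A)), (∀ w ∈ Ls, w ∈ l) →
    ∀ u, Ls.flatten = u ++ [x] → x ∈ Last (l : Set (List A)) := by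
  intro Ls
  induction Ls with
  | nil => intro _ u h; simp at h
  | cons w Ls ih =>
    intro hmem u h
    rcases Ls.flatten.eq_nil_or_concat with he | ⟨b', c, he⟩
    · simp only [List.flatten_cons, he, List.append_nil] at h
      exact ⟨u, h ▸ hmem w (by simp)⟩
    · rw [List.concat_eq_append] at he
      rw [List.flatten_cons, he, ← List.append_assoc] at h
      obtain ⟨-, hc⟩ := List.append_inj' h (by simp)
      obtain rfl : c = x := by simpa using hc
      exact ih (fun w hw => hmem w (by simp [hw])) b' he

lemma follow_flatten_aux : ∀ (Ls : List (List A)), (∀ w ∈ Ls, w ∈ l) →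
    ∀ u v, Ls.flatten = u ++ x :: y :: v →
      y ∈ Follow x (l : Set (List A)) ∨
        (x ∈ Last (l : Set (List A)) ∧ y ∈ First (l : Set (List A))) := by
  intro Ls
  induction Ls with
  | nil => intro _ u v h; simp at h
  | cons w Ls ih =>
    intro hmem u v h
    rw [List.flatten_cons, List.append_eq_append_iff] at h
    rcases h with ⟨a', ha', hb'⟩ | ⟨c', hc', hd'⟩
    · exact ih (fun w hw => hmem w (by simp [hw])) a' v hb'
    · rcases c' with _ | ⟨x', _ | ⟨y', c''⟩⟩
      · simp only [List.nil_append] at hd'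
        exact ih (fun w hw => hmem w (by simp [hw])) [] v hd'.symm
      · obtain ⟨rfl, hyv⟩ : x = x' ∧ y :: v = Ls.flatten := by simpa using hd'
        refine Or.inr ⟨⟨u, hc' ▸ hmem w (by simp)⟩, ?_⟩
        exact first_flatten_aux Ls (fun w hw => hmem w (by simp [hw])) v hyv.symm
      · obtain ⟨rfl, rfl, -⟩ : x = x' ∧ y = y' ∧ v = c'' ++ Ls.flatten := by simpa using hd'
        exact Or.inl ⟨u, c'', hc' ▸ hmem w (by simp)⟩

lemma first_kstar_sub (h : x ∈ First (KStar.kstar l : Language A)) :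
    x ∈ First (l : Set (List A)) := by
  obtain ⟨v, hv⟩ := h
  replace hv := Language.mem_kstar.mp hv
  obtain ⟨Ls, hflat, hmem⟩ := hv
  exact first_flatten_aux Ls hmem v hflat.symm

lemma last_kstar_sub (h : x ∈ Last (KStar.kstar l : Language A)) :
    x ∈ Last (l : Set (List A)) := by
  obtain ⟨u, hu⟩ := h
  replace hu := Language.mem_kstar.mp hu
  obtain ⟨Ls, hflat, hmem⟩ := hu
  exact last_flatten_aux Ls hmem u hflat.symm

lemma follow_kstar_sub (h : y ∈ Follow x (KStar.kstar l : Language A)) :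
    y ∈ Follow x (l : Set (List A)) ∨
      (x ∈ Last (l : Set (List A)) ∧ y ∈ First (l : Set (List A))) := by
  obtain ⟨u, v, huv⟩ := h
  replace huv := Language.mem_kstar.mp huv
  obtain ⟨Ls, hflat, hmem⟩ := huv
  exact follow_flatten_aux Ls hmem u v hflat.symm

lemma self_mem_kstar {w : List A} (h : w ∈ l) : w ∈ (KStar.kstar l : Language A) := by
  rw [Language.mem_kstar]; exact ⟨[w], by simp, by simpa⟩

lemma append_mem_kstar {w v : List A} (hw : w ∈ l) (hv : v ∈ (KStar.kstar l : Language A)) :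
    w ++ v ∈ (KStar.kstar l : Language A) := by
  rw [Language.mem_kstar] at hv ⊢
  obtain ⟨Ls, rfl, hmem⟩ := hv
  exact ⟨w :: Ls, by simp, by
    intro y hy; rcases List.mem_cons.mp hy with rfl | hy; exacts [hw, hmem y hy]⟩

lemma getLast_append_right {u v : List A} (hv : v ≠ []) (h : u ++ v ≠ []) :
    (u ++ v).getLast h = v.getLast hv := by
  exact List.getLast_append_of_ne_nil h hv

lemma chain'_imp_of_mem {R R' : A → A → Prop} {w : List A} (h : w.Chain' R)
    (h' : ∀ a ∈ w, ∀ b ∈ w, R a b → R' a b) : w.Chain' R' := by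
  rw [List.Chain', List.isChain_iff_getElem] at h ⊢
  intro i hi
  exact h' _ (List.getElem_mem _) _ (List.getElem_mem _) (h i hi)

lemma all_mem_of_chain' {R : A → A → Prop} {S : Set A}
    (habs : ∀ a b, a ∈ S → R a b → b ∈ S) :
    ∀ {w : List A} (hw : w ≠ []), w.Chain' R → w.head hw ∈ S → ∀ a ∈ w, a ∈ S := by
  intro w
  induction w with
  | nil => intro hw; exact absurd rfl hw
  | cons x w ih =>
    intro _ hchain hhead a ha
    rcases List.mem_cons.mp ha with rfl | ha
    · exact hhead
    · cases w with
      | nil => simp at ha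
      | cons b w' =>
        have hR : R x b := (List.isChain_cons_cons.mp hchain).1
        exact ih (by simp) (List.IsChain.tail hchain) (habs _ _ hhead hR) a ha

/-- Split a chain at a first place where the `C` alternative is used. -/
lemma chain'_split {R R' C : A → A → Prop} (hRC : ∀ a b, R a b → R' a b ∨ C a b) :
    ∀ {w : List A}, w.Chain' R →
      w.Chain' R' ∨ ∃ u x y v, w = u ++ x :: y :: v ∧ (u ++ [x]).Chain' R' ∧ C x y := by
  intro w
  induction w with
  | nil => intro _; exact Or.inl List.isChain_nil
  | cons a w ih =>
    intro hw
    match w, hw with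
    | [], _ => exact Or.inl (List.isChain_singleton a)
    | b :: w', hw =>
      have hab : R a b := (List.isChain_cons_cons.mp hw).1
      have htail : (b :: w').Chain' R := (List.isChain_cons_cons.mp hw).2
      rcases hRC a b hab with h' | hC
      · rcases ih htail with hc | ⟨u, x, y, v, heq, hux, hxy⟩
        · exact Or.inl (List.isChain_cons_cons.mpr ⟨h', hc⟩)
        · refine Or.inr ⟨a :: u, x, y, v, by rw [List.cons_append, ← heq], ?_, hxy⟩
          rw [List.cons_append]
          refine List.isChain_cons.mpr ⟨?_, hux⟩
          intro z hz
          have hzb : b = z := by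
            have h2 : (u ++ [x]).head? = some b := by
              rw [show (u ++ [x]).head? = (u ++ x :: y :: v).head? by cases u <;> simp, ← heq]
              rfl
            rw [h2] at hz
            simpa using hz
          exact hzb ▸ h'
      · exact Or.inr ⟨[], a, b, w', rfl, List.isChain_singleton a, hC⟩

/-- Split a word whose chain preserves an absorbing set `S` into the part outside `S`
followed by the part inside `S`. -/
lemma chain'_absorb_split {R : A → A → Prop} {S : Set A}
    (habs : ∀ a b, a ∈ S → R a b → b ∈ S) :
    ∀ {w : List A}, w.Chain' R →
      ∃ u v, w = u ++ v ∧ (∀ a ∈ u, a ∉ S) ∧ (∀ a ∈ v, a ∈ S) := by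
  intro w
  induction w with
  | nil => intro _; exact ⟨[], [], by simp, by simp, by simp⟩
  | cons a w ih =>
    intro hw
    by_cases ha : a ∈ S
    · refine ⟨[], a :: w, by simp, by simp, ?_⟩
      exact all_mem_of_chain' habs (by simp) hw ha
    · obtain ⟨u, v, heq, hu, hv⟩ := ih (List.IsChain.tail hw)
      exact ⟨a :: u, v, by rw [List.cons_append, heq], by
        intro b hb; rcases List.mem_cons.mp hb with rfl | hb
        exacts [ha, hu b hb], hv⟩

lemma mem_lettersList : ∀ {E : RegularExpression A} {w : List A} {a : A},
    w ∈ E.matches' → a ∈ w → a ∈ lettersList E := by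
  intro E
  induction E with
  | zero => intro w a hw; exact hw.elim
  | epsilon =>
    intro w a hw ha
    rw [show (RegularExpression.epsilon : RegularExpression A).matches' = 1 from rfl,
      Language.mem_one] at hw
    subst hw; simp at ha
  | char c =>
    intro w a hw ha
    have : w = [c] := hw
    subst this
    simpa [lettersList] using ha
  | plus P Q ihP ihQ =>
    intro w a hw ha
    rcases (Language.mem_add _ _ w).mp hw with h | h
    · exact List.mem_append_left _ (ihP h ha)
    · exact List.mem_append_right _ (ihQ h ha)
  | comp P Q ihP ihQ =>
    intro w a hw ha
    obtain ⟨u, hu, v, hv, rfl⟩ := Language.mem_mul.mp hw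
    rcases List.mem_append.mp ha with h | h
    · exact List.mem_append_left _ (ihP hu h)
    · exact List.mem_append_right _ (ihQ hv h)
  | star P ihP =>
    intro w a hw ha
    obtain ⟨Ls, rfl, hmem⟩ := Language.mem_kstar.mp hw
    obtain ⟨u, hu, hau⟩ := List.mem_flatten.mp ha
    exact ihP (hmem u hu) hau

lemma mem_first_of_mem {w : List A} (hw : w ≠ []) (h : w ∈ L) : w.head hw ∈ First L :=
  ⟨w.tail, by rwa [List.cons_head_tail]⟩

lemma mem_last_of_mem {w : List A} (hw : w ≠ []) (h : w ∈ L) : w.getLast hw ∈ Last L :=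
  ⟨w.dropLast, by rwa [List.dropLast_append_getLast]⟩

lemma chain'_follow_of_mem {w : List A} (h : w ∈ L) :
    w.Chain' (fun a b => b ∈ Follow a L) := by
  rw [List.Chain', List.isChain_iff_getElem]
  intro i hi
  have h1 : i < w.length := by omega
  have h2 : i + 1 < w.length := by omega
  refine ⟨w.take i, w.drop (i + 2), ?_⟩
  have he : w.take i ++ w[i] :: w[i + 1] :: w.drop (i + 2) = w := by
    conv_rhs => rw [← List.take_append_drop i w]
    rw [List.drop_eq_getElem_cons h1, List.drop_eq_getElem_cons h2]
  rwa [he]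

end Lemmas

section Glushkov

variable {A : Type*}

lemma glushkov : ∀ (E : RegularExpression A), Linear E →
    ∀ (w : List A) (hw : w ≠ []),
      w.head hw ∈ First (E.matches' : Set (List A)) →
      w.getLast hw ∈ Last (E.matches' : Set (List A)) →
      w.Chain' (fun a b => b ∈ Follow a (E.matches' : Set (List A))) →
      w ∈ E.matches' := by
  intro E
  induction E with
  | zero =>
    intro _ w hw hfirst _ _
    obtain ⟨v, hv⟩ := hfirst
    exact hv.elim
  | epsilon =>
    intro _ w hw hfirst _ _
    obtain ⟨v, hv⟩ := hfirst
    rw [show (RegularExpression.epsilon : RegularExpression A).matches' = 1 from rfl,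
      ] at hv
    replace hv := (Language.mem_one _).mp hv
    simp at hv
  | char a =>
    intro _ w hw hfirst _ hchain
    obtain ⟨v, hv⟩ := hfirst
    obtain ⟨h1, h2⟩ : w.head hw = a ∧ v = [] := by
      have hv' : w.head hw :: v = [a] := hv
      simpa using hv'
    have hwt := List.cons_head_tail hw
    cases htail : w.tail with
    | nil =>
      show w = [a]
      rw [← hwt, htail, h1]
    | cons b t =>
      exfalso
      rw [← hwt, htail] at hchain
      have hb : b ∈ Follow (w.head hw) ((RegularExpression.char a).matches' : Set (List A)) :=
        (List.isChain_cons_cons.mp hchain).1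
      obtain ⟨u, v', huv⟩ := hb
      have he : u ++ w.head hw :: b :: v' = [a] := huv
      have := congrArg List.length he
      simp at this
      omega
  | plus P Q ihP ihQ =>
    intro hlin w hw hfirst hlast hchain
    have hlin' : (lettersList P ++ lettersList Q).Nodup := hlin
    obtain ⟨hndP, hndQ, hdisj'⟩ := List.nodup_append.mp hlin'
    have hdisj : ∀ {a}, a ∈ lettersList P → a ∈ lettersList Q → False :=
      fun ha hb => hdisj' _ ha _ hb rfl
    set LP : Set (List A) := (P.matches' : Set (List A)) with hLPdef
    set LQ : Set (List A) := (Q.matches' : Set (List A)) with hLQdef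
    have hLset : ((P.plus Q).matches' : Set (List A)) = LP ∪ LQ := by
      ext z; exact Language.mem_add _ _ z
    rw [hLset, first_union] at hfirst
    rw [hLset, last_union] at hlast
    rw [hLset] at hchain
    have hmemP : ∀ a, a ∈ lettersOf LP → a ∈ lettersList P := fun a ha => by
      obtain ⟨z, hz, haz⟩ := ha; exact mem_lettersList hz haz
    have hmemQ : ∀ a, a ∈ lettersOf LQ → a ∈ lettersList Q := fun a ha => by
      obtain ⟨z, hz, haz⟩ := ha; exact mem_lettersList hz haz
    rcases hfirst with hf | hf
    · have hall : ∀ a ∈ w, a ∈ {a | a ∈ lettersList P} := by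
        refine all_mem_of_chain' ?_ hw hchain (hmemP _ (first_letters hf))
        intro a b ha hb
        rw [follow_union] at hb
        rcases hb with hb | hb
        · exact hmemP _ (follow_letters_right hb)
        · exact absurd (hmemQ _ (follow_letters_left hb)) (fun h => hdisj ha h)
      have hchainP : w.Chain' (fun a b => b ∈ Follow a LP) := by
        refine chain'_imp_of_mem hchain ?_
        intro a ha b _ hab
        rw [follow_union] at hab
        rcases hab with h | h
        · exact h
        · exact absurd (hmemQ _ (follow_letters_left h)) (fun hq => hdisj (hall a ha) hq)
      have hlastP : w.getLast hw ∈ Last LP := by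
        rcases hlast with h | h
        · exact h
        · exact absurd (hmemQ _ (last_letters h))
            (fun hq => hdisj (hall _ (List.getLast_mem hw)) hq)
      exact (Language.mem_add _ _ w).mpr (Or.inl (ihP hndP w hw hf hlastP hchainP))
    · have hall : ∀ a ∈ w, a ∈ {a | a ∈ lettersList Q} := by
        refine all_mem_of_chain' ?_ hw hchain (hmemQ _ (first_letters hf))
        intro a b ha hb
        rw [follow_union] at hb
        rcases hb with hb | hb
        · exact absurd ha (fun h => hdisj (hmemP _ (follow_letters_left hb)) h)
        · exact hmemQ _ (follow_letters_right hb)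
      have hchainQ : w.Chain' (fun a b => b ∈ Follow a LQ) := by
        refine chain'_imp_of_mem hchain ?_
        intro a ha b _ hab
        rw [follow_union] at hab
        rcases hab with h | h
        · exact absurd (hall a ha) (fun hq => hdisj (hmemP _ (follow_letters_left h)) hq)
        · exact h
      have hlastQ : w.getLast hw ∈ Last LQ := by
        rcases hlast with h | h
        · exact absurd (hall _ (List.getLast_mem hw))
            (fun hq => hdisj (hmemP _ (last_letters h)) hq)
        · exact h
      exact (Language.mem_add _ _ w).mpr (Or.inr (ihQ hndQ w hw hf hlastQ hchainQ))
  | comp P Q ihP ihQ =>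
    intro hlin w hw hfirst hlast hchain
    have hlin' : (lettersList P ++ lettersList Q).Nodup := hlin
    obtain ⟨hndP, hndQ, hdisj'⟩ := List.nodup_append.mp hlin'
    have hdisj : ∀ {a}, a ∈ lettersList P → a ∈ lettersList Q → False :=
      fun ha hb => hdisj' _ ha _ hb rfl
    have hEq : (P.comp Q).matches' = P.matches' * Q.matches' := rfl
    rw [hEq] at hfirst hlast hchain ⊢
    set LP : Set (List A) := (P.matches' : Set (List A)) with hLPdef
    set LQ : Set (List A) := (Q.matches' : Set (List A)) with hLQdef
    have hmemP : ∀ a, a ∈ lettersOf LP → a ∈ lettersList P := fun a ha => by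
      obtain ⟨z, hz, haz⟩ := ha; exact mem_lettersList hz haz
    have hmemQ : ∀ a, a ∈ lettersOf LQ → a ∈ lettersList Q := fun a ha => by
      obtain ⟨z, hz, haz⟩ := ha; exact mem_lettersList hz haz
    set SQ : Set A := {a | a ∈ lettersList Q} with hSQdef
    have habs : ∀ a b, a ∈ SQ →
        b ∈ Follow a (P.matches' * Q.matches' : Set (List A)) → b ∈ SQ ∧ b ∈ Follow a LQ := by
      intro a b ha hb
      rcases follow_mul_sub hb with h | h | ⟨h1, h2⟩
      · exact absurd (hmemP _ (follow_letters_left h)) (fun hp => hdisj hp ha)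
      · exact ⟨hmemQ _ (follow_letters_right h), h⟩
      · exact absurd (hmemP _ (last_letters h1)) (fun hp => hdisj hp ha)
    rcases first_mul_sub hfirst with hf | ⟨hnilP, hf⟩
    · -- word starts inside P
      obtain ⟨u, v, heqw, hu, hv⟩ := chain'_absorb_split
        (fun a b ha hb => (habs a b ha hb).1) hchain
      subst heqw
      have hune : u ≠ [] := by
        rintro rfl
        simp only [List.nil_append] at hf hv hw
        exact hdisj (hmemP _ (first_letters hf)) (hv _ (List.head_mem hw))
      rw [List.Chain', List.isChain_append] at hchain
      obtain ⟨hcu, hcv, hbound⟩ := hchain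
      have hchainPu : u.Chain' (fun a b => b ∈ Follow a LP) := by
        refine chain'_imp_of_mem hcu ?_
        intro a ha b hb hab
        rcases follow_mul_sub hab with h | h | ⟨h1, h2⟩
        · exact h
        · exact absurd (hmemQ _ (follow_letters_left h)) (hu a ha)
        · exact absurd (hmemQ _ (first_letters h2)) (hu b hb)
      have hheadu : u.head hune ∈ First LP := by
        rwa [List.head_append_of_ne_nil hune] at hf
      by_cases hvnil : v = []
      · subst hvnil
        have hlast' : u.getLast hune ∈ Last (P.matches' * Q.matches' : Set (List A)) := by
          have : (u ++ []).getLast hw = u.getLast hune := by simp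
          rwa [this] at hlast
        rcases last_mul_sub hlast' with h | ⟨h1, h2⟩
        · exact absurd (hmemQ _ (last_letters h)) (hu _ (List.getLast_mem hune))
        · have huP := ihP hndP u hune hheadu h1 hchainPu
          exact Language.mem_mul.mpr ⟨u, huP, [], h2, by simp⟩
      · have hboundR : v.head hvnil ∈
            Follow (u.getLast hune) (P.matches' * Q.matches' : Set (List A)) := by
          apply hbound
          · rw [List.getLast?_eq_getLast hune]; rfl
          · rw [List.head?_eq_head hvnil]; rfl
        rcases follow_mul_sub hboundR with h | h | ⟨h1, h2⟩
        · exact absurd (hmemP _ (follow_letters_right h))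
            (fun hp => hdisj hp (hv _ (List.head_mem hvnil)))
        · exact absurd (hmemQ _ (follow_letters_left h)) (hu _ (List.getLast_mem hune))
        · have huP := ihP hndP u hune hheadu h1 hchainPu
          have hchainQv : v.Chain' (fun a b => b ∈ Follow a LQ) :=
            chain'_imp_of_mem hcv (fun a ha b _ hab => (habs a b (hv a ha) hab).2)
          have hlastv : v.getLast hvnil ∈ Last LQ := by
            have heqg : (u ++ v).getLast hw = v.getLast hvnil :=
              getLast_append_right hvnil hw
            rw [heqg] at hlast
            rcases last_mul_sub hlast with h | ⟨hp, -⟩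
            · exact h
            · exact absurd (hmemP _ (last_letters hp))
                (fun hP => hdisj hP (hv _ (List.getLast_mem hvnil)))
          have hvQ := ihQ hndQ v hvnil h2 hlastv hchainQv
          exact Language.mem_mul.mpr ⟨u, huP, v, hvQ, rfl⟩
    · -- ε ∈ LP, word entirely inside Q
      have hheadSQ : w.head hw ∈ SQ := hmemQ _ (first_letters hf)
      have hall : ∀ a ∈ w, a ∈ SQ :=
        all_mem_of_chain' (fun a b ha hb => (habs a b ha hb).1) hw hchain hheadSQ
      have hchainQ : w.Chain' (fun a b => b ∈ Follow a LQ) :=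
        chain'_imp_of_mem hchain (fun a ha b _ hab => (habs a b (hall a ha) hab).2)
      have hlastQ : w.getLast hw ∈ Last LQ := by
        rcases last_mul_sub hlast with h | ⟨hp, -⟩
        · exact h
        · exact absurd (hmemP _ (last_letters hp))
            (fun hP => hdisj hP (hall _ (List.getLast_mem hw)))
      have hwQ := ihQ hndQ w hw hf hlastQ hchainQ
      exact Language.mem_mul.mpr ⟨[], hnilP, w, hwQ, rfl⟩
  | star P ihP =>
    intro hlin w hw hfirst hlast hchain
    have hndP : Linear P := hlin
    have hEq : (P.star).matches' = KStar.kstar P.matches' := rfl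
    rw [hEq] at hfirst hlast hchain ⊢
    suffices H : ∀ n, ∀ w : List A, w.length ≤ n → ∀ hw : w ≠ [],
        w.head hw ∈ First (KStar.kstar P.matches' : Language A) →
        w.getLast hw ∈ Last (KStar.kstar P.matches' : Language A) →
        w.Chain' (fun a b => b ∈ Follow a (KStar.kstar P.matches' : Language A)) →
        w ∈ (KStar.kstar P.matches' : Language A) by
      exact H w.length w le_rfl hw hfirst hlast hchain
    intro n
    induction n with
    | zero =>
      intro w hl hw _ _ _
      exact absurd (List.length_eq_zero_iff.mp (Nat.le_zero.mp hl)) hw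
    | succ n ihn =>
      intro w hlen hw hfirst hlast hchain
      have hfP : w.head hw ∈ First (P.matches' : Set (List A)) := first_kstar_sub hfirst
      have hsplit := chain'_split
        (R := fun a b => b ∈ Follow a (KStar.kstar P.matches' : Language A))
        (R' := fun a b => b ∈ Follow a (P.matches' : Set (List A)))
        (C := fun a b => a ∈ Last (P.matches' : Set (List A)) ∧
          b ∈ First (P.matches' : Set (List A)))
        (fun a b h => follow_kstar_sub h) hchain
      rcases hsplit with hch | ⟨u, x, y, v, heq, hux, hxLast, hyFirst⟩
      · exact self_mem_kstar (ihP hndP w hw hfP (last_kstar_sub hlast) hch)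
      · have hu' : (u ++ [x]) ≠ [] := by simp
        have hhead : (u ++ [x]).head hu' ∈ First (P.matches' : Set (List A)) := by
          have hh : w.head hw = (u ++ [x]).head hu' := by
            subst heq; cases u <;> simp
          rwa [hh] at hfP
        have hlastu : (u ++ [x]).getLast hu' = x := List.getLast_append_singleton u
        have huP : (u ++ [x]) ∈ P.matches' :=
          ihP hndP _ hu' hhead (by rw [hlastu]; exact hxLast) hux
        have hvne : (y :: v) ≠ [] := by simp
        have hsuffix : (y :: v) <:+ w := ⟨u ++ [x], by rw [heq]; simp⟩
        have hchainv := hchain.suffix hsuffix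
        have hheadv : (y :: v).head hvne ∈
            First (KStar.kstar P.matches' : Language A) := by
          obtain ⟨t, ht⟩ := hyFirst
          exact ⟨t, self_mem_kstar ht⟩
        have hlastv : (y :: v).getLast hvne ∈
            Last (KStar.kstar P.matches' : Language A) := by
          have hg : w.getLast hw = (y :: v).getLast hvne := by
            subst heq
            rw [getLast_append_right (v := x :: y :: v) (by simp) hw]
            exact List.getLast_cons hvne
          rwa [hg] at hlast
        have hlenv : (y :: v).length ≤ n := by
          have hlw : (y :: v).length + 1 ≤ w.length := by
            rw [heq]
            simp only [List.length_append, List.length_cons]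
            omega
          omega
        have hvK := ihn (y :: v) hlenv hvne hheadv hlastv hchainv
        have hfin := append_mem_kstar huP hvK
        rwa [show (u ++ [x]) ++ (y :: v) = w by rw [heq]; simp] at hfin

end Glushkov

section NFApart

variable {A : Type*}

lemma evalFrom_position (L : Set (List A)) (w : List A) (q : Option A) :
    q ∈ (positionNFA L).evalFrom {none} w ↔
      (w = [] ∧ q = none) ∨
        ∃ h : w ≠ [], q = some (w.getLast h) ∧ w.head h ∈ First L ∧
          w.Chain' fun a b => b ∈ Follow a L := by
  induction w using List.reverseRecOn generalizing q with
  | nil => simp [NFA.evalFrom_nil]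
  | append_singleton u a ih =>
    rw [NFA.evalFrom_append, NFA.evalFrom_singleton, NFA.mem_stepSet]
    constructor
    · rintro ⟨t, ht, hstep⟩
      obtain ⟨hq, hcond⟩ : q = some a ∧ _ := hstep
      rcases (ih t).mp ht with ⟨rfl, rfl⟩ | ⟨hu, rfl, hufirst, huchain⟩
      · refine Or.inr ⟨by simp, ?_, ?_, ?_⟩
        · rw [hq]; simp
        · simpa using (hcond : a ∈ First L)
        · exact List.isChain_singleton a
      · refine Or.inr ⟨by simp, ?_, ?_, ?_⟩
        · rw [hq, List.getLast_append_singleton]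
        · rwa [List.head_append_of_ne_nil hu]
        · rw [List.Chain', List.isChain_append]
          refine ⟨huchain, List.isChain_singleton a, ?_⟩
          intro z hz y hy
          rw [List.getLast?_eq_getLast hu] at hz
          obtain rfl : u.getLast hu = z := by simpa using hz
          obtain rfl : a = y := by simpa using hy
          exact (hcond : a ∈ Follow (u.getLast hu) L)
    · rintro (⟨habs, -⟩ | ⟨h, hq, hfirst, hchain⟩)
      · exact absurd habs (by simp)
      · by_cases hu : u = []
        · subst hu
          refine ⟨none, (ih none).mpr (Or.inl ⟨rfl, rfl⟩), ?_, ?_⟩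
          · rw [hq]; simp
          · show a ∈ First L
            simpa using hfirst
        · rw [List.Chain', List.isChain_append] at hchain
          obtain ⟨hcu, -, hbound⟩ := hchain
          refine ⟨some (u.getLast hu), (ih _).mpr (Or.inr ⟨hu, rfl, ?_, hcu⟩), ?_, ?_⟩
          · rwa [List.head_append_of_ne_nil hu] at hfirst
          · rw [hq, List.getLast_append_singleton]
          · show a ∈ Follow (u.getLast hu) L
            apply hbound
            · rw [List.getLast?_eq_getLast hu]; rfl
            · rfl

end NFApart

/-- For a regular expression `E` in linear form, a nonempty word `x₁⋯xₘ` belongs to `L(E)`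
iff `x₁ ∈ First(E)`, `xₘ ∈ Last(E)` and `xᵢ₊₁ ∈ Follow(xᵢ, E)` for all `i < m`.
Consequently, the position automaton of `E` recognizes `L(E)`. -/
theorem position_automaton_correct {A : Type*} (E : RegularExpression A) (hE : Linear E) :
    (∀ (w : List A) (hw : w ≠ []),
        (w ∈ E.matches' ↔
          w.head hw ∈ First (E.matches' : Set (List A)) ∧
            w.getLast hw ∈ Last (E.matches' : Set (List A)) ∧
            w.Chain' fun a b => b ∈ Follow a (E.matches' : Set (List A)))) ∧
      (positionNFA (E.matches' : Set (List A))).accepts = E.matches' := by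
  have part1 : ∀ (w : List A) (hw : w ≠ []),
      (w ∈ E.matches' ↔
        w.head hw ∈ First (E.matches' : Set (List A)) ∧
          w.getLast hw ∈ Last (E.matches' : Set (List A)) ∧
          w.Chain' fun a b => b ∈ Follow a (E.matches' : Set (List A))) := by
    intro w hw
    constructor
    · intro hwL
      exact ⟨mem_first_of_mem hw hwL, mem_last_of_mem hw hwL, chain'_follow_of_mem hwL⟩
    · rintro ⟨h1, h2, h3⟩
      exact glushkov E hE w hw h1 h2 h3
  refine ⟨part1, ?_⟩
  ext w
  rw [NFA.mem_accepts]
  by_cases hw : w = []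
  · subst hw
    rw [NFA.evalFrom_nil]
    constructor
    · rintro ⟨q, hq, hqs⟩
      obtain rfl : q = none := hqs
      rcases hq with ⟨x, hx, h⟩ | ⟨-, h⟩
      · exact absurd h (by simp)
      · exact h
    · intro h
      exact ⟨none, Or.inr ⟨rfl, h⟩, rfl⟩
  · constructor
    · rintro ⟨q, hq, hqe⟩
      rcases (evalFrom_position _ w q).mp hqe with ⟨rfl, -⟩ | ⟨h, rfl, hfirst, hchain⟩
      · exact absurd rfl hw
      · rcases hq with ⟨x, hx, hqx⟩ | ⟨hqn, -⟩
        · obtain rfl : w.getLast h = x := by simpa using hqx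
          exact (part1 w hw).mpr ⟨hfirst, hx, hchain⟩
        · exact absurd hqn (by simp)
    · intro hwL
      obtain ⟨h1, h2, h3⟩ := (part1 w hw).mp hwL
      exact ⟨some (w.getLast hw), Or.inl ⟨_, h2, rfl⟩,
        (evalFrom_position _ w _).mpr (Or.inr ⟨hw, rfl, h1, h3⟩)⟩


end Mtb
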